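/- Let A be a d×d real positive semidefinite matrix, let B ⊆ ℝ^d be a closed convex set, and define g(u, v) = (u − v)ᵀ A (u − v) for u, v ∈ ℝ^d. Let x̂ ∈ ℝ^d and let x* ∈ B be a minimizer of x ↦ g(x̂, x) over B, i.e. g(x̂, x*) ≤ g(x̂, x) for all x ∈ B. Then for every x₀ ∈ B, g(x*, x₀) ≤ g(x̂, x₀). -/

import Mathlib

open Matrix

/-- projection lemma, first part. For a PSD matrix `A`, a closed convex
set `B`, `g u v = (u - v)ᵀ A (u - v)`, and `x*` a minimizer of `g x̂ ·` over `B`,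
we have `g x* x₀ ≤ g x̂ x₀` for all `x₀ ∈ B`. -/
theorem projection_lemma_mem {d : ℕ} (A : Matrix (Fin d) (Fin d) ℝ) (hA : A.PosSemidef)
    (B : Set (Fin d → ℝ)) (hBclosed : IsClosed B) (hBconvex : Convex ℝ B)
    (g : (Fin d → ℝ) → (Fin d → ℝ) → ℝ)
    (hg : ∀ u v, g u v = (u - v) ⬝ᵥ A.mulVec (u - v))
    (xhat : Fin d → ℝ) (xstar : Fin d → ℝ) (hxstar : xstar ∈ B)
    (hmin : ∀ x ∈ B, g xhat xstar ≤ g xhat x) :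
    ∀ x₀ ∈ B, g xstar x₀ ≤ g xhat x₀ := by
  intro x₀ hx₀
  set w := xhat - xstar with hw
  set z := x₀ - xstar with hz
  -- symmetry of the bilinear form
  have hsym : ∀ u v : Fin d → ℝ, u ⬝ᵥ A.mulVec v = v ⬝ᵥ A.mulVec u := by
    intro u v
    rw [Matrix.dotProduct_mulVec, ← Matrix.mulVec_transpose]
    have hAT : Aᵀ = A := by
      have := hA.1.eq
      simpa using this
    rw [hAT]
    exact dotProduct_comm _ _
  have hq : ∀ u : Fin d → ℝ, 0 ≤ u ⬝ᵥ A.mulVec u := by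
    intro u
    simpa using hA.dotProduct_mulVec_nonneg u
  set b : ℝ := w ⬝ᵥ A.mulVec z with hb
  set M : ℝ := z ⬝ᵥ A.mulVec z with hM
  -- variational inequality: 2*b ≤ t*M for all t ∈ (0,1]
  have key : ∀ t : ℝ, 0 < t → t ≤ 1 → 2 * b ≤ t * M := by
    intro t ht ht1
    have hmem : (1 - t) • xstar + t • x₀ ∈ B :=
      hBconvex hxstar hx₀ (by linarith) (le_of_lt ht) (by ring)
    have h := hmin _ hmem
    rw [hg, hg] at h
    have hexp : xhat - ((1 - t) • xstar + t • x₀) = w - t • z := by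
      simp only [hw, hz]
      funext i
      simp [Pi.smul_apply, smul_eq_mul]
      ring
    rw [hexp] at h
    have hq2 : (w - t • z) ⬝ᵥ A.mulVec (w - t • z)
        = w ⬝ᵥ A.mulVec w - 2 * t * b + t ^ 2 * M := by
      simp only [Matrix.mulVec_sub, sub_dotProduct, dotProduct_sub,
        Matrix.mulVec_smul, dotProduct_smul, smul_dotProduct, smul_eq_mul,
        ← hb, ← hM]
      rw [hsym z w]
      ring
    rw [hq2] at h
    have : 2 * t * b ≤ t ^ 2 * M := by linarith
    have := (mul_le_mul_iff_right₀ ht).mp (by nlinarith : t * (2 * b) ≤ t * (t * M))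
    nlinarith
  -- conclude b ≤ 0
  have hbnonpos : b ≤ 0 := by
    by_contra hc
    push_neg at hc
    have hM0 : 0 ≤ M := hq z
    have ht : (0:ℝ) < min 1 (b / (M + 1)) := by
      apply lt_min one_pos
      positivity
    have := key _ ht (min_le_left _ _)
    have h1 : min 1 (b / (M + 1)) * M ≤ (b / (M + 1)) * (M + 1) := by
      have := min_le_right 1 (b / (M + 1))
      nlinarith [min_le_right 1 (b / (M + 1))]
    rw [div_mul_cancel₀] at h1
    · linarith
    · linarith
  -- final computation
  rw [hg, hg]
  have e1 : xhat - x₀ = w - z := by simp [hw, hz]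
  have e2 : xstar - x₀ = -z := by simp [hz]
  rw [e1, e2]
  have hexp2 : (w - z) ⬝ᵥ A.mulVec (w - z)
      = w ⬝ᵥ A.mulVec w - 2 * b + M := by
    simp only [Matrix.mulVec_sub, sub_dotProduct, dotProduct_sub, ← hb, ← hM]
    rw [hsym z w]
    ring
  have hexp3 : (-z) ⬝ᵥ A.mulVec (-z) = M := by
    simp [Matrix.mulVec_neg, ← hM]
  rw [hexp2, hexp3]
  have := hq w
  linarith
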